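/- The R(T)-valued operator norm on the T-strong dual Ê, defined by ‖𝔣‖ := inf{k ∈ R(T)_+ : |𝔣(x)| ≤ k‖x‖_{T,2} for all x ∈ E}, is attained in the sense that |𝔣(x)| ≤ ‖𝔣‖ ‖x‖_{T,2} for all x ∈ L^2(T); i.e., the infimum defining ‖𝔣‖ is a minimum. -/

import Mathlib

/-!
Common setup.  `E` models the universal completion `E_u` of the `T`-universally
complete Riesz space `L¹(T)`: a Dedekind complete (conditionally complete)
`f`-algebra whose multiplicative unit `1 = e = Te` is a weak order unit.
`T : E → E` models the strictly positive conditional expectation operator,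
`L1 ⊆ E` its natural domain `L¹(T)`, `L2 L1` the space `L²(T)` and `RT T` the
range `R(T)` of `T`.
-/

variable {E : Type*}

/-- The range `R(T)` of the conditional expectation operator. -/
def RT (T : E → E) : Set E := Set.range T

/-- `L²(T) = {f ∈ L¹(T) : f² ∈ L¹(T)}`, the product taken in the `f`-algebra `E_u`. -/
def L2 [Mul E] (L1 : Set E) : Set E := {f | f ∈ L1 ∧ f * f ∈ L1}

variable [CommRing E] [ConditionallyCompleteLattice E]

/-- `T` is a strictly positive conditional expectation operator on the
`T`-universally complete space `L¹(T)` (modelled by the set `L1` inside the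
Dedekind complete `f`-algebra `E`), with `1 = e = Te` a weak order unit. -/
structure IsCondExp (T : E → E) (L1 : Set E) : Prop where
  /-- compatibility of the order with addition -/
  addLe : ∀ a b c : E, a ≤ b → a + c ≤ b + c
  /-- products of positive elements are positive -/
  mulPos : ∀ a b : E, 0 ≤ a → 0 ≤ b → 0 ≤ a * b
  /-- the `f`-algebra property -/
  fAlg : ∀ a b c : E, a ⊓ b = 0 → 0 ≤ c → (c * a) ⊓ b = 0
  /-- `1 = e` is a weak order unit -/
  weakUnit : ∀ x : E, 0 ≤ x → x ⊓ 1 = 0 → x = 0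
  /-- `T` is additive -/
  addT : ∀ a b : E, T (a + b) = T a + T b
  /-- `T` is positive -/
  posT : ∀ a : E, 0 ≤ a → 0 ≤ T a
  /-- `T` is strictly positive -/
  strictT : ∀ a : E, 0 ≤ a → T a = 0 → a = 0
  /-- `T` is a projection -/
  projT : ∀ a : E, T (T a) = T a
  /-- `T` maps the weak order unit `e = 1` to itself -/
  unitT : T 1 = 1
  /-- `T` is an averaging operator: `T(T a · b) = T a · T b` -/
  avgT : ∀ a b : E, T (T a * b) = T a * T b
  /-- `T` is order continuous -/
  ordContT : ∀ S : Set E, S.Nonempty → DirectedOn (· ≥ ·) S → (∀ x ∈ S, 0 ≤ x) →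
      IsGLB S 0 → IsGLB (T '' S) 0
  /-- `L¹(T)` is closed under addition -/
  l1add : ∀ a ∈ L1, ∀ b ∈ L1, a + b ∈ L1
  /-- `L¹(T)` is solid -/
  l1sol : ∀ a ∈ L1, ∀ b : E, |b| ≤ |a| → b ∈ L1
  /-- `R(T) ⊆ L¹(T)` and `T` maps `L¹(T)` into itself -/
  rtL1 : ∀ a : E, T a ∈ L1
  /-- `L²(T)` is an `R(T)`-module -/
  l2mod : ∀ α ∈ RT T, ∀ x ∈ L2 L1, α * x ∈ L2 L1
  /-- `T`-universal completeness of `L¹(T)` -/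
  tuc : ∀ S : Set E, S.Nonempty → (∀ x ∈ S, 0 ≤ x ∧ x ∈ L1) → DirectedOn (· ≤ ·) S →
      BddAbove (T '' S) → BddAbove S ∧ sSup S ∈ L1

/-- `sqrt` is a square-root function on the positive cone of the `f`-algebra. -/
def IsSqrt (sqrt : E → E) : Prop := ∀ a : E, 0 ≤ a → 0 ≤ sqrt a ∧ sqrt a * sqrt a = a

/-- The `R(T)`-valued norm `‖f‖_{T,2} = (T (f²))^{1/2}` on `L²(T)`. -/
def nrm (T : E → E) (sqrt : E → E) (f : E) : E := sqrt (T (f * f))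

/-- A `T`-linear functional on `E = L²(T)`: `R(T)`-valued, additive,
`R(T)`-homogeneous and order bounded.  The set of these is the `T`-dual `E*`. -/
def TLinear (T : E → E) (L1 : Set E) (F : E → E) : Prop :=
  (∀ x ∈ L2 L1, F x ∈ RT T) ∧
  (∀ x ∈ L2 L1, ∀ y ∈ L2 L1, F (x + y) = F x + F y) ∧
  (∀ α ∈ RT T, ∀ x ∈ L2 L1, F (α * x) = α * F x) ∧
  (∀ x ∈ L2 L1, 0 ≤ x → ∃ b : E, ∀ y ∈ L2 L1, |y| ≤ x → |F y| ≤ b)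

/-- `T`-strong boundedness: `|F x| ≤ k ‖x‖_{T,2}` for some `k ∈ R(T)₊`. -/
def StronglyBdd (T : E → E) (L1 : Set E) (sqrt : E → E) (F : E → E) : Prop :=
  ∃ k ∈ RT T, 0 ≤ k ∧ ∀ x ∈ L2 L1, |F x| ≤ k * nrm T sqrt x

/-- Membership in the `T`-strong dual `Ê` of `L²(T)`. -/
def MemEhat (T : E → E) (L1 : Set E) (sqrt : E → E) (F : E → E) : Prop :=
  TLinear T L1 F ∧ StronglyBdd T L1 sqrt F

/-- The Riesz representation map `Ψ(f)(g) = T (f g)`. -/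
def Psi (T : E → E) (f : E) : E → E := fun g => T (f * g)

/-- The Riesz–Kantorovich set `{F y + G z : y, z ∈ L²(T)₊, y + z = x}` whose
supremum is `(F ∨ G)(x)` and whose infimum is `(F ∧ G)(x)`. -/
def RKset (L1 : Set E) (F G : E → E) (x : E) : Set E :=
  {v | ∃ y z : E, y ∈ L2 L1 ∧ z ∈ L2 L1 ∧ 0 ≤ y ∧ 0 ≤ z ∧ y + z = x ∧ v = F y + G z}

/-- The partial order on functionals: `F ≤ G` iff `F x ≤ G x` for all `x ∈ L²(T)₊`. -/
def leF [Mul E] (L1 : Set E) (F G : E → E) : Prop := ∀ x ∈ L2 L1, 0 ≤ x → F x ≤ G x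


section Aux
variable {E : Type*} [CommRing E] [ConditionallyCompleteLattice E]

private def covL (hadd : ∀ a b c : E, a ≤ b → a + c ≤ b + c) :
    CovariantClass E E (· + ·) (· ≤ ·) :=
  ⟨fun a _ _ h => by simpa [add_comm a] using hadd _ _ a h⟩

private def covR (hadd : ∀ a b c : E, a ≤ b → a + c ≤ b + c) :
    CovariantClass E E (Function.swap (· + ·)) (· ≤ ·) :=
  ⟨fun a _ _ h => hadd _ _ a h⟩

private theorem mul_mono' (hadd : ∀ a b c : E, a ≤ b → a + c ≤ b + c)
    (hmul : ∀ a b : E, 0 ≤ a → 0 ≤ b → 0 ≤ a * b)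
    {a b c : E} (h : a ≤ b) (hc : 0 ≤ c) : c * a ≤ c * b := by
  haveI := covL hadd; haveI := covR hadd
  have h2 := hmul c (b - a) hc (sub_nonneg.2 h)
  rw [mul_sub, sub_nonneg] at h2
  exact h2

/-- `c * (a ⊓ b) = (c*a) ⊓ (c*b)` for `c ≥ 0`. -/
private theorem inf_mul' (hadd : ∀ a b c : E, a ≤ b → a + c ≤ b + c)
    (hfa : ∀ a b c : E, a ⊓ b = 0 → 0 ≤ c → (c * a) ⊓ b = 0)
    {c : E} (hc : 0 ≤ c) (a b : E) : c * (a ⊓ b) = (c * a) ⊓ (c * b) := by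
  haveI := covL hadd; haveI := covR hadd
  set i := a ⊓ b with hi
  have hab : (a - i) ⊓ (b - i) = 0 := by
    rw [sub_eq_neg_add, sub_eq_neg_add, ← add_inf, ← hi, neg_add_cancel]
  have h1 : (c * (a - i)) ⊓ (b - i) = 0 := hfa _ _ _ hab hc
  have h2 : (c * (b - i)) ⊓ (c * (a - i)) = 0 :=
    hfa _ _ _ (by rw [inf_comm]; exact h1) hc
  have key : (c * a - c * i) ⊓ (c * b - c * i) = 0 := by
    rw [← mul_sub, ← mul_sub, inf_comm]; exact h2
  rw [sub_eq_neg_add, sub_eq_neg_add, ← add_inf] at key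
  have := congrArg (fun t => c * i + t) key
  simpa [add_assoc, ← add_assoc] using this.symm

/-- disjoint positive elements have zero product -/
private theorem disj_mul' (hfa : ∀ a b c : E, a ⊓ b = 0 → 0 ≤ c → (c * a) ⊓ b = 0)
    {a b : E} (ha : 0 ≤ a) (h : a ⊓ b = 0) : a * b = 0 := by
  have h1 : (b * a) ⊓ b = 0 := hfa _ _ _ h (by
    have : 0 ≤ a ⊓ b := le_of_eq h.symm
    exact le_trans this inf_le_right)
  have h2 : (a * b) ⊓ (a * b) = 0 := by
    have hb : b ⊓ (a * b) = 0 := by rw [inf_comm, mul_comm]; exact h1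
    exact hfa _ _ _ hb ha
  simpa using h2

private theorem sq_nonneg' (hadd : ∀ a b c : E, a ≤ b → a + c ≤ b + c)
    (hmul : ∀ a b : E, 0 ≤ a → 0 ≤ b → 0 ≤ a * b)
    (hfa : ∀ a b c : E, a ⊓ b = 0 → 0 ≤ c → (c * a) ⊓ b = 0)
    (x : E) : 0 ≤ x * x := by
  haveI := covL hadd; haveI := covR hadd
  have hx : x⁺ - x⁻ = x := posPart_sub_negPart x
  have hd : x⁺ ⊓ x⁻ = 0 := posPart_inf_negPart_eq_zero x
  have hp : (0:E) ≤ x⁺ := posPart_nonneg x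
  have hn : (0:E) ≤ x⁻ := negPart_nonneg x
  have hz : x⁺ * x⁻ = 0 := disj_mul' hfa hp hd
  have key : x * x = x⁺ * x⁺ + x⁻ * x⁻ := by
    conv_lhs => rw [← hx]
    rw [sub_mul, mul_sub, mul_sub, mul_comm (x⁻) (x⁺), hz]
    ring
  rw [key]
  exact add_nonneg (hmul _ _ hp hp) (hmul _ _ hn hn)

private theorem one_nonneg' (hadd : ∀ a b c : E, a ≤ b → a + c ≤ b + c)
    (hmul : ∀ a b : E, 0 ≤ a → 0 ≤ b → 0 ≤ a * b)
    (hfa : ∀ a b c : E, a ⊓ b = 0 → 0 ≤ c → (c * a) ⊓ b = 0) : (0:E) ≤ 1 := by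
  haveI := covL hadd; haveI := covR hadd
  set u := (1:E)⁺; set v := (1:E)⁻
  have huv : u ⊓ v = 0 := posPart_inf_negPart_eq_zero 1
  have hu : (0:E) ≤ u := posPart_nonneg 1
  have hv : (0:E) ≤ v := negPart_nonneg 1
  have h1 : u - v = 1 := posPart_sub_negPart 1
  have hvv : u * v = v + v * v := by
    have : (u - v) * v = v := by rw [h1, one_mul]
    rw [sub_mul, sub_eq_iff_eq_add] at this
    exact this
  have h2 : (v * u) ⊓ v = 0 := hfa _ _ _ huv hv
  have hle : v ≤ (v * u) ⊓ v := le_inf (by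
      rw [mul_comm, hvv]
      exact le_add_of_nonneg_right (hmul v v hv hv)) le_rfl
  have hv0 : v = 0 := le_antisymm (h2 ▸ hle) hv
  have : (1:E) = u := by rw [← h1, hv0, sub_zero]
  rw [this]; exact hu
end Aux

section Aux2
variable {E : Type*} [CommRing E] [ConditionallyCompleteLattice E]

/-- subadditivity of `⊓` on positives -/
private theorem inf_add_le3 (hadd : ∀ a b c : E, a ≤ b → a + c ≤ b + c)
    {u v w : E} (hu : 0 ≤ u) (hv : 0 ≤ v) (hw : 0 ≤ w) :
    (u + v) ⊓ w ≤ u ⊓ w + v ⊓ w := by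
  haveI := covL hadd; haveI := covR hadd
  have expand : u ⊓ w + v ⊓ w = ((u + v) ⊓ (u + w)) ⊓ ((w + v) ⊓ (w + w)) := by
    rw [inf_add, add_inf, add_inf]
  rw [expand]
  refine le_inf (le_inf inf_le_left ?_) (le_inf ?_ ?_)
  · exact le_trans inf_le_right (le_add_of_nonneg_left hu)
  · exact le_trans inf_le_right (le_add_of_nonneg_right hv)
  · exact le_trans inf_le_right (le_add_of_nonneg_left hw)

/-- `⊓` is 1-Lipschitz -/
private theorem inf_lipschitz (hadd : ∀ a b c : E, a ≤ b → a + c ≤ b + c)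
    {a c c' : E} (h : c' ≤ c) : a ⊓ c ≤ a ⊓ c' + (c - c') := by
  haveI := covL hadd; haveI := covR hadd
  rw [← sub_le_iff_le_add]
  refine le_inf ?_ ?_
  · exact le_trans (sub_le_self _ (sub_nonneg.2 h)) inf_le_left
  · have h1 : a ⊓ c - (c - c') ≤ c - (c - c') := sub_le_sub_right inf_le_right _
    have h2 : c - (c - c') = c' := by ring
    rwa [h2] at h1

/-- the weak order unit property in sup form -/
private theorem weak_unit_sup (hadd : ∀ a b c : E, a ≤ b → a + c ≤ b + c)
    (hwu : ∀ x : E, 0 ≤ x → x ⊓ 1 = 0 → x = 0)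
    (hone : (0:E) ≤ 1)
    {z u : E} (hz : 0 ≤ z) (hu : ∀ n : ℕ, z ⊓ n • (1:E) ≤ u) : z ≤ u := by
  haveI := covL hadd; haveI := covR hadd
  set w := ⨆ n : ℕ, z ⊓ n • (1:E) with hw
  have hbdd : BddAbove (Set.range fun n : ℕ => z ⊓ n • (1:E)) :=
    ⟨z, by rintro _ ⟨n, rfl⟩; exact inf_le_left⟩
  have hwz : w ≤ z := ciSup_le fun n => inf_le_left
  set t := (z - w) ⊓ 1 with ht
  have ht0 : 0 ≤ t := le_inf (sub_nonneg.2 hwz) hone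
  have key : ∀ n : ℕ, z ⊓ n • (1:E) + t ≤ w := by
    intro n
    have h2 : z ⊓ n • (1:E) ≤ w := le_ciSup hbdd n
    have h1 : z ⊓ n • (1:E) + t ≤ z := by
      have h3 : z ⊓ n • (1:E) + t ≤ w + (z - w) :=
        add_le_add h2 inf_le_left
      have h4 : w + (z - w) = z := by ring
      rwa [h4] at h3
    have h5 : z ⊓ n • (1:E) + t ≤ (n + 1) • (1:E) := by
      rw [succ_nsmul]
      exact add_le_add inf_le_right inf_le_right
    exact le_trans (le_inf h1 h5) (le_ciSup hbdd (n + 1))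
  have hwle : w ≤ w - t := ciSup_le fun n => le_sub_iff_add_le.2 (key n)
  have htle : t ≤ 0 := by
    have h5 : w + -w ≤ w - t + -w := add_le_add hwle (le_refl (-w))
    have e1 : w + -w = (0:E) := by ring
    have e2 : w - t + -w = -t := by ring
    rw [e1, e2] at h5
    simpa using h5
  have hteq : (z - w) ⊓ 1 = 0 := le_antisymm htle ht0
  have hzw0 := hwu (z - w) (sub_nonneg.2 hwz) hteq
  have hzw : z = w := by rw [← sub_eq_zero]; exact hzw0
  rw [hzw]
  exact ciSup_le fun n => hu n

/-- directed sets with infimum 0 absorb natural multiples -/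
private theorem glb_nsmul (hadd : ∀ a b c : E, a ≤ b → a + c ≤ b + c)
    {D : Set E} (hne : D.Nonempty) (hdir : DirectedOn (· ≥ ·) D)
    (hglb : IsGLB D 0) :
    ∀ n : ℕ, ∀ c : E, (∀ d ∈ D, c ≤ n • d) → c ≤ 0 := by
  haveI := covL hadd; haveI := covR hadd
  intro n
  induction n with
  | zero =>
    intro c h
    obtain ⟨d, hd⟩ := hne
    simpa using h d hd
  | succ n ih =>
    intro c h
    have hlb : c ∈ lowerBounds D := by
      intro d' hd'
      have hsub : c - d' ≤ 0 := by
        refine ih (c - d') ?_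
        intro d hd
        obtain ⟨d'', hd'', h1, h2⟩ := hdir d hd d' hd'
        have hc : c ≤ (n + 1) • d'' := h d'' hd''
        rw [succ_nsmul] at hc
        have h3 : n • d'' + d'' ≤ n • d + d' := add_le_add (nsmul_le_nsmul_right h1 n) h2
        exact sub_le_iff_le_add.2 (le_trans hc h3)
      exact sub_nonpos.1 hsub
    exact hglb.2 hlb
end Aux2

section Aux3
variable {E : Type*} [CommRing E] [ConditionallyCompleteLattice E]

/-- order continuity of multiplication by a positive element, in the form we need -/
private theorem mul_cont (hadd : ∀ a b c : E, a ≤ b → a + c ≤ b + c)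
    (hmul : ∀ a b : E, 0 ≤ a → 0 ≤ b → 0 ≤ a * b)
    (hfa : ∀ a b c : E, a ⊓ b = 0 → 0 ≤ c → (c * a) ⊓ b = 0)
    (hwu : ∀ x : E, 0 ≤ x → x ⊓ 1 = 0 → x = 0)
    {D : Set E} (hne : D.Nonempty) (hdir : DirectedOn (· ≥ ·) D)
    (hpos : ∀ d ∈ D, 0 ≤ d) (hglb : IsGLB D 0)
    {y b : E} (hy : 0 ≤ y) (hb : 0 ≤ b)
    (hbd : ∀ d ∈ D, b ≤ d * y) : b = 0 := by
  haveI := covL hadd; haveI := covR hadd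
  have hone : (0:E) ≤ 1 := one_nonneg' hadd hmul hfa
  -- truncations
  set p : ℕ → E := fun n => (y - n • (1:E)) ⊔ 0 with hp
  set q : ℕ → E := fun n => 1 ⊓ ((n • (1:E) - y) ⊔ 0) with hq
  have hp0 : ∀ n, 0 ≤ p n := fun n => le_sup_right
  have hq0 : ∀ n, 0 ≤ q n := fun n => le_inf hone le_sup_right
  have hq1 : ∀ n, q n ≤ 1 := fun n => inf_le_left
  have hpq : ∀ n, p n ⊓ q n = 0 := by
    intro n
    refine le_antisymm ?_ (le_inf (hp0 n) (hq0 n))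
    have h1 : p n ⊓ q n ≤ ((y - n • (1:E)) ⊔ 0) ⊓ ((-(y - n • (1:E))) ⊔ 0) := by
      have e : -(y - n • (1:E)) = n • (1:E) - y := by ring
      rw [e]
      exact inf_le_inf le_rfl inf_le_right
    have h2 : ((y - n • (1:E)) ⊔ 0) ⊓ ((-(y - n • (1:E))) ⊔ 0) = 0 := by
      have := posPart_inf_negPart_eq_zero (y - n • (1:E))
      rwa [posPart_def, negPart_def] at this
    rw [h2] at h1
    exact h1
  -- Step A
  have stepA : ∀ n : ℕ, ∀ d ∈ D, b ⊓ q n ≤ n • d := by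
    intro n d hd
    have hd0 : 0 ≤ d := hpos d hd
    have hy' : y ≤ n • (1:E) + p n := by
      have : y - n • (1:E) ≤ p n := le_sup_left
      exact sub_le_iff_le_add'.1 this
    have hmul1 : d * y ≤ d * (n • (1:E) + p n) := mul_mono' hadd hmul hy' hd0
    have hexp : d * (n • (1:E) + p n) = n • d + d * p n := by
      rw [mul_add, mul_comm d (n • (1:E)), smul_mul_assoc, one_mul]
    have hb1 : b ≤ n • d + d * p n := le_trans (hbd d hd) (by rwa [hexp] at hmul1)
    have h1 : b ⊓ q n ≤ (n • d + d * p n) ⊓ q n := inf_le_inf (le_inf hb1 le_rfl |>.trans inf_le_left) le_rfl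
    have hnd0 : 0 ≤ n • d := nsmul_nonneg hd0 n
    have hdp0 : 0 ≤ d * p n := hmul _ _ hd0 (hp0 n)
    have h2 : (n • d + d * p n) ⊓ q n ≤ (n • d) ⊓ q n + (d * p n) ⊓ q n :=
      inf_add_le3 hadd hnd0 hdp0 (hq0 n)
    have h3 : (d * p n) ⊓ q n = 0 := hfa _ _ _ (hpq n) hd0
    calc b ⊓ q n ≤ (n • d + d * p n) ⊓ q n := inf_le_inf hb1 le_rfl
      _ ≤ (n • d) ⊓ q n + (d * p n) ⊓ q n := h2
      _ = (n • d) ⊓ q n := by rw [h3, add_zero]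
      _ ≤ n • d := inf_le_left
  -- Step B
  have stepB : ∀ n : ℕ, b ⊓ q n = 0 := by
    intro n
    refine le_antisymm ?_ (le_inf hb (hq0 n))
    exact glb_nsmul hadd hne hdir hglb n (b ⊓ q n) (stepA n)
  -- Step C
  have stepC : ∀ n : ℕ, (1 + y) ⊓ n • (1:E) ≤ (1 + y) - b ⊓ 1 := by
    intro n
    have h1 : b ⊓ 1 ≤ b ⊓ q n + (1 - q n) := inf_lipschitz hadd (hq1 n)
    rw [stepB n, zero_add] at h1
    have h2 : 1 ⊓ (n • (1:E) - y) ≤ q n := le_inf inf_le_left (le_trans inf_le_right le_sup_left)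
    have h3 : q n ≤ 1 - b ⊓ 1 := by
      have := sub_le_sub_left h1 1  -- 1 - (1 - q n) ≤ 1 - b ⊓ 1 ... wrong direction
      -- direct: from h1 : b⊓1 ≤ 1 - q n, get q n ≤ 1 - b⊓1
      have h4 : b ⊓ 1 + q n ≤ 1 := by
        have := add_le_add h1 (le_refl (q n))
        have e : 1 - q n + q n = (1:E) := by ring
        rwa [e] at this
      have h5 := add_le_add_right (le_refl (q n)) 0
      -- q n ≤ 1 - b ⊓ 1 ↔ q n + b ⊓ 1 ≤ 1
      rw [le_sub_iff_add_le]
      rwa [add_comm] at h4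
    have h6 : 1 ⊓ (n • (1:E) - y) ≤ 1 - b ⊓ 1 := le_trans h2 h3
    have h7 := add_le_add h6 (le_refl y)
    have e1 : 1 ⊓ (n • (1:E) - y) + y = (1 + y) ⊓ (n • (1:E)) := by
      rw [inf_add]
      congr 1
      ring
    have e2 : 1 - b ⊓ 1 + y = (1 + y) - b ⊓ 1 := by ring
    rwa [e1, e2] at h7
  have hzpos : 0 ≤ 1 + y := add_nonneg hone hy
  have hfinal : 1 + y ≤ (1 + y) - b ⊓ 1 := weak_unit_sup hadd hwu hone hzpos stepC
  have hble : b ⊓ 1 ≤ 0 := by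
    have h5 := add_le_add hfinal (le_refl (b ⊓ 1 - (1 + y)))
    have e1 : 1 + y + (b ⊓ 1 - (1 + y)) = b ⊓ 1 := by ring
    have e2 : (1 + y) - b ⊓ 1 + (b ⊓ 1 - (1 + y)) = (0:E) := by ring
    rwa [e1, e2] at h5
  exact hwu b hb (le_antisymm hble (le_inf hb hone))
end Aux3

section Aux4
variable {E : Type*} [CommRing E] [ConditionallyCompleteLattice E]
variable {T : E → E} {L1 : Set E}

private theorem T_zero (hT : IsCondExp T L1) : T 0 = 0 := by
  have h := hT.addT 0 0
  rw [add_zero] at h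
  linear_combination -h

private theorem T_sub (hT : IsCondExp T L1) (a b : E) : T (a - b) = T a - T b := by
  have h := hT.addT (a - b) b
  rw [sub_add_cancel] at h
  rw [eq_sub_iff_add_eq, ← h]

private theorem T_mono (hT : IsCondExp T L1) {a b : E} (h : a ≤ b) : T a ≤ T b := by
  haveI := covL hT.addLe; haveI := covR hT.addLe
  have h1 := hT.posT (b - a) (sub_nonneg.2 h)
  rw [T_sub hT, sub_nonneg] at h1
  exact h1

private theorem mem_RT_iff (hT : IsCondExp T L1) {k : E} : k ∈ RT T ↔ T k = k := by
  constructor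
  · rintro ⟨a, rfl⟩; exact hT.projT a
  · intro h; exact ⟨k, h⟩

private theorem fix_posPart (hT : IsCondExp T L1) {k : E} (h : T k = k) :
    T (k ⊔ 0) = k ⊔ 0 := by
  haveI := covL hT.addLe; haveI := covR hT.addLe
  have hge : k ⊔ 0 ≤ T (k ⊔ 0) := by
    have h0 : T 0 ≤ T (k ⊔ 0) := T_mono hT le_sup_right
    rw [T_zero hT] at h0
    have hk' : T k ≤ T (k ⊔ 0) := T_mono hT le_sup_left
    rw [h] at hk'
    exact sup_le hk' h0
  have hw : (0:E) ≤ T (k ⊔ 0) - (k ⊔ 0) := sub_nonneg.2 hge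
  have hTw : T (T (k ⊔ 0) - (k ⊔ 0)) = 0 := by
    rw [T_sub hT, hT.projT, sub_self]
  have := hT.strictT _ hw hTw
  rw [sub_eq_zero] at this
  exact this.symm ▸ rfl

private theorem fix_inf (hT : IsCondExp T L1) {k₁ k₂ : E}
    (h1 : T k₁ = k₁) (h2 : T k₂ = k₂) : T (k₁ ⊓ k₂) = k₁ ⊓ k₂ := by
  haveI := covL hT.addLe; haveI := covR hT.addLe
  have key : k₁ ⊓ k₂ = k₁ - ((k₁ - k₂) ⊔ 0) := by
    rw [sub_sup, sub_zero]
    have : k₁ - (k₁ - k₂) = k₂ := by ring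
    rw [this, inf_comm]
  have hsub : T (k₁ - k₂) = k₁ - k₂ := by rw [T_sub hT, h1, h2]
  rw [key, T_sub hT, h1, fix_posPart hT hsub]

end Aux4

/-- The `R(T)`-valued operator norm
`‖F‖ = inf {k ∈ R(T)₊ : |F x| ≤ k ‖x‖_{T,2} ∀ x}` on `Ê` is attained: the
infimum is a minimum, so that `|F x| ≤ ‖F‖ ‖x‖_{T,2}` for all `x ∈ L²(T)`. -/
theorem stmt14 (T : E → E) (L1 : Set E) (hT : IsCondExp T L1)
    (sqrt : E → E) (hsqrt : IsSqrt sqrt)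
    (F : E → E) (hF : MemEhat T L1 sqrt F) :
    ∃ m : E, m ∈ RT T ∧ 0 ≤ m ∧
      IsGLB {k : E | k ∈ RT T ∧ 0 ≤ k ∧ ∀ x ∈ L2 L1, |F x| ≤ k * nrm T sqrt x} m ∧
      ∀ x ∈ L2 L1, |F x| ≤ m * nrm T sqrt x := by
  haveI := covL hT.addLe; haveI := covR hT.addLe
  set K : Set E := {k : E | k ∈ RT T ∧ 0 ≤ k ∧ ∀ x ∈ L2 L1, |F x| ≤ k * nrm T sqrt x} with hK
  obtain ⟨k₀, hk₀RT, hk₀0, hk₀⟩ := hF.2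
  have hKne : K.Nonempty := ⟨k₀, hk₀RT, hk₀0, hk₀⟩
  have hbdd : BddBelow K := ⟨0, fun k hk => hk.2.1⟩
  set m := sInf K with hm
  have hglb : IsGLB K m := isGLB_csInf hKne hbdd
  have hm0 : 0 ≤ m := hglb.2 fun k hk => hk.2.1
  -- positivity of norms
  have hnrm : ∀ x : E, 0 ≤ nrm T sqrt x := fun x =>
    (hsqrt _ (hT.posT _ (sq_nonneg' hT.addLe hT.mulPos hT.fAlg x))).1
  -- K is closed under infima
  have hKinf : ∀ k₁ ∈ K, ∀ k₂ ∈ K, k₁ ⊓ k₂ ∈ K := by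
    rintro k₁ ⟨hk₁RT, hk₁0, hk₁⟩ k₂ ⟨hk₂RT, hk₂0, hk₂⟩
    refine ⟨(mem_RT_iff hT).2 (fix_inf hT ((mem_RT_iff hT).1 hk₁RT) ((mem_RT_iff hT).1 hk₂RT)),
      le_inf hk₁0 hk₂0, ?_⟩
    intro x hx
    have hdist : (k₁ ⊓ k₂) * nrm T sqrt x
        = (k₁ * nrm T sqrt x) ⊓ (k₂ * nrm T sqrt x) := by
      rw [mul_comm (k₁ ⊓ k₂), inf_mul' hT.addLe hT.fAlg (hnrm x) k₁ k₂,
        mul_comm _ k₁, mul_comm _ k₂]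
    rw [hdist]
    exact le_inf (hk₁ x hx) (hk₂ x hx)
  -- the translated set
  set D : Set E := (fun k => k - m) '' K with hD
  have hDne : D.Nonempty := hKne.image _
  have hDpos : ∀ d ∈ D, 0 ≤ d := by
    rintro _ ⟨k, hk, rfl⟩
    exact sub_nonneg.2 (hglb.1 hk)
  have hDdir : DirectedOn (· ≥ ·) D := by
    rintro _ ⟨k₁, hk₁, rfl⟩ _ ⟨k₂, hk₂, rfl⟩
    exact ⟨k₁ ⊓ k₂ - m, ⟨k₁ ⊓ k₂, hKinf _ hk₁ _ hk₂, rfl⟩,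
      sub_le_sub_right inf_le_left m, sub_le_sub_right inf_le_right m⟩
  have hDglb : IsGLB D 0 := by
    constructor
    · rintro _ ⟨k, hk, rfl⟩
      exact sub_nonneg.2 (hglb.1 hk)
    · intro l hl
      have : l + m ∈ lowerBounds K := by
        intro k hk
        have := hl ⟨k, hk, rfl⟩
        have h2 := add_le_add this (le_refl m)
        have e : k - m + m = k := by ring
        rwa [e] at h2
      have := hglb.2 this
      have h3 := add_le_add this (le_refl (-m))
      have e1 : l + m + -m = l := by ring
      have e2 : m + -m = (0:E) := by ring
      rwa [e1, e2] at h3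
  -- m is a fixed point of T
  have hmRT : m ∈ RT T := by
    have hTD := hT.ordContT D hDne hDdir hDpos hDglb
    have himg : T '' D = (fun k => k - T m) '' K := by
      rw [hD, Set.image_image]
      apply Set.image_congr
      intro k hk
      rw [T_sub hT, (mem_RT_iff hT).1 hk.1]
    rw [himg] at hTD
    have hKTm : IsGLB K (T m) := by
      constructor
      · intro k hk
        have := hTD.1 ⟨k, hk, rfl⟩
        exact sub_nonneg.1 this
      · intro l hl
        have : l - T m ∈ lowerBounds ((fun k => k - T m) '' K) := by
          rintro _ ⟨k, hk, rfl⟩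
          exact sub_le_sub_right (hl hk) _
        have h2 := hTD.2 this
        rw [sub_nonpos] at h2
        exact h2
    have : T m = m := (hglb.unique hKTm).symm
    exact ⟨m, this⟩
  -- the final bound
  refine ⟨m, hmRT, hm0, hglb, ?_⟩
  intro x hx
  set y := nrm T sqrt x with hy
  set b := (|F x| - m * y) ⊔ 0 with hb
  have hb0 : (0:E) ≤ b := le_sup_right
  have hbd : ∀ d ∈ D, b ≤ d * y := by
    rintro _ ⟨k, hk, rfl⟩
    refine sup_le ?_ (hT.mulPos _ _ (sub_nonneg.2 (hglb.1 hk)) (hnrm x))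
    have h1 : |F x| ≤ k * y := hk.2.2 x hx
    have e : (k - m) * y = k * y - m * y := by ring
    rw [e]
    exact sub_le_sub_right h1 _
  have hb_eq : b = 0 :=
    mul_cont hT.addLe hT.mulPos hT.fAlg hT.weakUnit hDne hDdir hDpos hDglb
      (hnrm x) hb0 hbd
  have : |F x| - m * y ≤ 0 := by
    have h1 : |F x| - m * y ≤ b := le_sup_left
    rwa [hb_eq] at h1
  exact sub_nonpos.1 this
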